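/- Let S be a nonempty bounded subset of ℝ^d with the Euclidean norm, and for each coordinate k ∈ {1,…,d} let m_k = inf{ s_k : s ∈ S } and M_k = sup{ s_k : s ∈ S }. If x, y ∈ ℝ^d satisfy m_k ≤ x_k ≤ M_k and m_k ≤ y_k ≤ M_k for every k, then dist(x, y) ≤ √d · diam(S). -/
import Mathlib

lemma coord_dist_le_dist (d : ℕ) (s t : EuclideanSpace ℝ (Fin d)) (k : Fin d) :
    |s k - t k| ≤ dist s t := by
  rw [EuclideanSpace.dist_eq, ← Real.sqrt_sq_eq_abs]
  apply Real.sqrt_le_sqrt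
  have := Finset.single_le_sum (f := fun i => dist (s i) (t i) ^ 2)
    (fun i _ => sq_nonneg _) (Finset.mem_univ k)
  simpa [Real.dist_eq] using this

/-- Any two points of the coordinate-parallel bounding box of a nonempty bounded set
`S ⊆ ℝ^d` are at distance at most `√d · diam S`. -/
theorem dist_le_sqrt_mul_diam_of_mem_boundingBox (d : ℕ)
    (S : Set (EuclideanSpace ℝ (Fin d))) (hS : S.Nonempty)
    (hb : Bornology.IsBounded S) (x y : EuclideanSpace ℝ (Fin d))
    (hx : ∀ k : Fin d, sInf ((fun s => s k) '' S) ≤ x k ∧ x k ≤ sSup ((fun s => s k) '' S))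
    (hy : ∀ k : Fin d, sInf ((fun s => s k) '' S) ≤ y k ∧ y k ≤ sSup ((fun s => s k) '' S)) :
    dist x y ≤ Real.sqrt d * Metric.diam S := by
  have hdiam : 0 ≤ Metric.diam S := Metric.diam_nonneg
  have key : ∀ k : Fin d, |x k - y k| ≤ Metric.diam S := by
    intro k
    have himg : Bornology.IsBounded ((fun s => s k) '' S) := by
      rw [Metric.isBounded_iff] at hb ⊢
      obtain ⟨C, hC⟩ := hb
      refine ⟨C, ?_⟩
      rintro _ ⟨s, hs, rfl⟩ _ ⟨t, ht, rfl⟩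
      calc dist (s k) (t k) = |s k - t k| := Real.dist_eq _ _
        _ ≤ dist s t := coord_dist_le_dist d s t k
        _ ≤ C := hC hs ht
    have hbA : BddAbove ((fun s => s k) '' S) := himg.bddAbove
    have hbB : BddBelow ((fun s => s k) '' S) := himg.bddBelow
    have hub : sSup ((fun s => s k) '' S) ≤ sInf ((fun s => s k) '' S) + Metric.diam S := by
      apply csSup_le (hS.image _)
      rintro _ ⟨s, hs, rfl⟩
      have h1 : s k - Metric.diam S ≤ sInf ((fun s => s k) '' S) := by
        apply le_csInf (hS.image _)
        rintro _ ⟨t, ht, rfl⟩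
        have h2 : |s k - t k| ≤ dist s t := coord_dist_le_dist d s t k
        have h3 : dist s t ≤ Metric.diam S := Metric.dist_le_diam_of_mem hb hs ht
        have := (abs_le.mp (h2.trans h3)).2
        linarith
      linarith
    obtain ⟨hx1, hx2⟩ := hx k
    obtain ⟨hy1, hy2⟩ := hy k
    rw [abs_le]
    constructor <;> linarith
  rw [EuclideanSpace.dist_eq]
  have hsum : ∑ i, dist (x i) (y i) ^ 2 ≤ (d : ℝ) * Metric.diam S ^ 2 := by
    calc ∑ i, dist (x i) (y i) ^ 2 ≤ ∑ _i : Fin d, Metric.diam S ^ 2 := by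
          apply Finset.sum_le_sum
          intro i _
          rw [Real.dist_eq]
          exact pow_le_pow_left₀ (abs_nonneg _) (key i) 2
      _ = (d : ℝ) * Metric.diam S ^ 2 := by simp [mul_comm]
  calc Real.sqrt (∑ i, dist (x i) (y i) ^ 2) ≤ Real.sqrt ((d : ℝ) * Metric.diam S ^ 2) :=
        Real.sqrt_le_sqrt hsum
    _ = Real.sqrt d * Metric.diam S := by
        rw [Real.sqrt_mul (by positivity), Real.sqrt_sq hdiam]
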